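/- Lemma (stochastic estimation-sequence inequality for SOptDE): Suppose Assumptions 1, 2 and 5 hold and run the SOptDE algorithm (with parameter σ ≥ 0). For each k ∈ [K] and u ∈ 𝒲 define E_{2k} := a_k ( ⟨F(w_k;ξ_k) + (L²a_k/(αγ)²) ∇_{w_k} ½‖w_k − z_{k−1}‖², w_k − z_k⟩ − (L²a_k/(αγ)²) ( ½‖w_k − z_{k−1}‖² + (γ/2)‖w_k − z_k‖² ) ) + a_k ⟨F(w_k) − F(w_k;ξ_k), w_k − u⟩. Then for every u ∈ 𝒲, E[ Σ_{k=1}^{K} a_k ( ⟨F(w_k), w_k − u⟩ − (σ/γ) V_{w_k − w_0}(u − w_0) ) ] ≤ E[ Σ_{k=1}^{K} E_{2k} ] + (1/(2γ))‖u − w_0‖², where the expectation is over all randomness of the algorithm. -/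

import Mathlib

open scoped RealInnerProductSpace
open Finset MeasureTheory

/-- `Vec d` is the ambient space `ℝ^d` with its standard inner product. -/
abbrev Vec (d : ℕ) := EuclideanSpace ℝ (Fin d)

/-- The dual norm `‖y‖_* = sup_{nrm x ≤ 1} ⟪x, y⟫` of a (general) norm `nrm` on `ℝ^d`. -/
noncomputable def dualNorm {d : ℕ} (nrm : Vec d → ℝ) (y : Vec d) : ℝ :=
  sSup ((fun x => (⟪x, y⟫ : ℝ)) '' {x | nrm x ≤ 1})

/-- The Bregman divergence `V_v(w) = ½‖w‖² − ½‖v‖² − ⟪∇½‖v‖², w − v⟫` of `½ nrm²`,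
where `g` is the gradient map of `½ nrm²`. -/
noncomputable def breg {d : ℕ} (nrm : Vec d → ℝ) (g : Vec d → Vec d) (v w : Vec d) : ℝ :=
  nrm w ^ 2 / 2 - nrm v ^ 2 / 2 - ⟪g v, w - v⟫

private lemma step_ineq (a c m σ γ P Q R Sv T n1 n2 n3 n4 n5 : ℝ)
    (hγ : 0 < γ) (hσ : 0 ≤ σ) (ha : 0 ≤ a) (hm : 0 ≤ m) (hac : a * c = m)
    (hn3 : 0 ≤ n3)
    (h1 : n1 / 2 + (Sv - R) + γ / 2 * n3 ≤ n2 / 2)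
    (h2 : n4 / 2 - T + γ / 2 * n3 ≤ n5 / 2) :
    a * (P - σ / γ * R) + σ * a / (2 * γ) * n1 -
      a * (P - Q + c * T - c * (n4 / 2 + γ / 2 * n3)) ≤
    a * (Q - σ / γ * Sv) + σ * a / (2 * γ) * n2 + m / 2 * n5 := by
  have h1' := mul_le_mul_of_nonneg_left h1 (show (0:ℝ) ≤ σ * a / γ by positivity)
  have h2' := mul_le_mul_of_nonneg_left h2 hm
  have e1 : a * (c * T) = m * T := by rw [← mul_assoc, hac]
  have e2 : a * (c * (n4 / 2 + γ / 2 * n3)) = m * (n4 / 2 + γ / 2 * n3) := by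
    rw [← mul_assoc, hac]
  have hsl : 0 ≤ σ * a / γ * (γ / 2 * n3) := by positivity
  simp only [div_eq_mul_inv, mul_inv] at h1' h2' e1 e2 hsl ⊢
  linarith [h1', h2', e1, e2, hsl]

private lemma seg_sc {d : ℕ} (nrm : Vec d → ℝ) (g : Vec d → Vec d) (γ : ℝ)
    (hsmul : ∀ (c : ℝ) (x : Vec d), nrm (c • x) = |c| * nrm x)
    (hstrong : ∀ v x : Vec d,
      nrm v ^ 2 / 2 + ⟪g v, x - v⟫ + γ / 2 * nrm (x - v) ^ 2 ≤ nrm x ^ 2 / 2)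
    (a b : Vec d) (t : ℝ) (ht0 : 0 ≤ t) (ht1 : t ≤ 1) :
    nrm ((1 - t) • a + t • b) ^ 2 ≤
      (1 - t) * nrm a ^ 2 + t * nrm b ^ 2 - γ * t * (1 - t) * nrm (b - a) ^ 2 := by
  have hneg : ∀ x : Vec d, nrm (-x) = nrm x := fun x => by
    simpa using hsmul (-1) x
  have h1 := hstrong ((1 - t) • a + t • b) a
  have h2 := hstrong ((1 - t) • a + t • b) b
  have ea : a - ((1 - t) • a + t • b) = t • (a - b) := by module
  have eb : b - ((1 - t) • a + t • b) = (1 - t) • (b - a) := by module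
  rw [ea, hsmul, abs_of_nonneg ht0, real_inner_smul_right] at h1
  rw [eb, hsmul, abs_of_nonneg (by linarith), real_inner_smul_right] at h2
  have hab : nrm (a - b) = nrm (b - a) := by rw [← neg_sub b a, hneg]
  have hi : (⟪g ((1 - t) • a + t • b), a - b⟫ : ℝ) =
      -⟪g ((1 - t) • a + t • b), b - a⟫ := by
    rw [← neg_sub b a, inner_neg_right]
  rw [hab, hi] at h1
  nlinarith [mul_le_mul_of_nonneg_left h1 (by linarith : (0:ℝ) ≤ 1 - t),
    mul_le_mul_of_nonneg_left h2 ht0]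

private lemma min_quad_growth {d : ℕ} (W : Set (Vec d)) (hWcv : Convex ℝ W)
    (nrm : Vec d → ℝ) (g : Vec d → Vec d) (γ : ℝ) (hγ : 0 < γ)
    (hsmul : ∀ (c : ℝ) (x : Vec d), nrm (c • x) = |c| * nrm x)
    (hstrong : ∀ v x : Vec d,
      nrm v ^ 2 / 2 + ⟪g v, x - v⟫ + γ / 2 * nrm (x - v) ^ 2 ≤ nrm x ^ 2 / 2)
    (S w0 : Vec d) (β : ℝ) (hβ : 0 ≤ β)
    (zs : Vec d) (hzsW : zs ∈ W)
    (hmin : ∀ x ∈ W, (⟪S, zs⟫ : ℝ) + β / (2 * γ) * nrm (zs - w0) ^ 2 ≤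
      ⟪S, x⟫ + β / (2 * γ) * nrm (x - w0) ^ 2)
    (zz : Vec d) (hzzW : zz ∈ W) :
    (⟪S, zs⟫ : ℝ) + β / (2 * γ) * nrm (zs - w0) ^ 2 + β / 2 * nrm (zz - zs) ^ 2 ≤
      ⟪S, zz⟫ + β / (2 * γ) * nrm (zz - w0) ^ 2 := by
  have hc0 : (0:ℝ) ≤ nrm (zz - zs) ^ 2 := sq_nonneg _
  have hstep : ∀ t : ℝ, 0 < t → t ≤ 1 →
      (⟪S, zs⟫ : ℝ) + β / (2 * γ) * nrm (zs - w0) ^ 2 +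
        β / 2 * ((1 - t) * nrm (zz - zs) ^ 2) ≤
      ⟪S, zz⟫ + β / (2 * γ) * nrm (zz - w0) ^ 2 := by
    intro t ht0 ht1
    have hmem : (1 - t) • zs + t • zz ∈ W :=
      hWcv hzsW hzzW (by linarith) (le_of_lt ht0) (by ring)
    have hm := hmin _ hmem
    have hseg := seg_sc nrm g γ hsmul hstrong (zs - w0) (zz - w0) t (le_of_lt ht0) ht1
    have hre2 : zz - w0 - (zs - w0) = zz - zs := by abel
    rw [hre2] at hseg
    have hre : (1 - t) • zs + t • zz - w0 = (1 - t) • (zs - w0) + t • (zz - w0) := by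
      module
    have hlin : (⟪S, (1 - t) • zs + t • zz⟫ : ℝ) = (1 - t) * ⟪S, zs⟫ + t * ⟪S, zz⟫ := by
      rw [inner_add_right, real_inner_smul_right, real_inner_smul_right]
    rw [hlin, hre] at hm
    have hB : (0:ℝ) ≤ β / (2 * γ) := by positivity
    have hM := mul_le_mul_of_nonneg_left hseg hB
    -- combine: t * LHS ≤ t * RHS
    have key : t * ((⟪S, zs⟫ : ℝ) + β / (2 * γ) * nrm (zs - w0) ^ 2 +
        β / 2 * ((1 - t) * nrm (zz - zs) ^ 2)) ≤
        t * ((⟪S, zz⟫ : ℝ) + β / (2 * γ) * nrm (zz - w0) ^ 2) := by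
      have hγγ : β / (2 * γ) * (γ * t * (1 - t) * nrm (zz - zs) ^ 2) =
          β / 2 * (t * (1 - t) * nrm (zz - zs) ^ 2) * (γ * γ⁻¹) := by
        simp only [div_eq_mul_inv, mul_inv]; ring
      rw [mul_inv_cancel₀ hγ.ne', mul_one] at hγγ
      simp only [div_eq_mul_inv, mul_inv] at hm hM hγγ ⊢
      nlinarith [hm, hM, hγγ]
    exact le_of_mul_le_mul_left key ht0
  by_contra hcon
  push_neg at hcon
  set c := nrm (zz - zs) ^ 2 with hc
  set D := β / 2 * c with hD
  have hD0 : 0 ≤ D := by rw [hD]; exact mul_nonneg (by linarith) hc0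
  set ε := (⟪S, zs⟫ : ℝ) + β / (2 * γ) * nrm (zs - w0) ^ 2 + D -
    ((⟪S, zz⟫ : ℝ) + β / (2 * γ) * nrm (zz - w0) ^ 2) with hε
  have hε0 : 0 < ε := by
    rw [hε]
    have : β / 2 * nrm (zz - zs) ^ 2 = D := by rw [hD, hc]
    linarith [hcon]
  have htpos : 0 < min 1 (ε / (D + 1)) :=
    lt_min one_pos (div_pos hε0 (by linarith))
  have hts := hstep _ htpos (min_le_left _ _)
  have h1 : min 1 (ε / (D + 1)) * D ≤ ε / (D + 1) * D :=
    mul_le_mul_of_nonneg_right (min_le_right _ _) hD0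
  have h2 : ε / (D + 1) * D < ε := by
    rw [div_mul_eq_mul_div, div_lt_iff₀ (by linarith : (0:ℝ) < D + 1)]
    nlinarith [hε0, hD0]
  have hts' : (⟪S, zs⟫ : ℝ) + β / (2 * γ) * nrm (zs - w0) ^ 2 + D -
      min 1 (ε / (D + 1)) * D ≤
      ⟪S, zz⟫ + β / (2 * γ) * nrm (zz - w0) ^ 2 := by
    have hexp : β / 2 * ((1 - min 1 (ε / (D + 1))) * c) = D - min 1 (ε / (D + 1)) * D := by
      rw [hD]; ring
    calc (⟪S, zs⟫ : ℝ) + β / (2 * γ) * nrm (zs - w0) ^ 2 + D - min 1 (ε / (D + 1)) * D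
        = (⟪S, zs⟫ : ℝ) + β / (2 * γ) * nrm (zs - w0) ^ 2 +
          β / 2 * ((1 - min 1 (ε / (D + 1))) * c) := by rw [hexp]; ring
      _ ≤ _ := hts
  linarith [hts', h1, h2]

private lemma pointwise_est {d : ℕ}
    (W : Set (Vec d)) (hWcv : Convex ℝ W)
    (nrm : Vec d → ℝ) (g : Vec d → Vec d) (F : Vec d → Vec d)
    (γ σ L α : ℝ) (hγ : 0 < γ) (hσ : 0 ≤ σ)
    (hsmul : ∀ (c : ℝ) (x : Vec d), nrm (c • x) = |c| * nrm x)
    (hstrong : ∀ v x : Vec d,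
      nrm v ^ 2 / 2 + ⟪g v, x - v⟫ + γ / 2 * nrm (x - v) ^ 2 ≤ nrm x ^ 2 / 2)
    (a A : ℕ → ℝ)
    (hak : ∀ k, 1 ≤ k → 0 ≤ a k)
    (hAnn : ∀ k, 0 ≤ A k)
    (hA0 : A 0 = 0)
    (hArec : ∀ k, 1 ≤ k → A k = A (k - 1) + a k)
    (hack : ∀ k, 1 ≤ k → a k * (L ^ 2 * a k / (α * γ) ^ 2) = 1 + σ * A (k - 1))
    (q w z : ℕ → Vec d) (w0 : Vec d) (hw0W : w0 ∈ W)
    (hz0 : z 0 = w0)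
    (hzk : ∀ k, 1 ≤ k → z k ∈ W ∧
      IsMinOn (fun x =>
        (⟪∑ i ∈ Finset.Icc 1 k, a i • (q i - (σ / γ) • g (w i - w0)), x⟫ : ℝ) +
        (1 + σ * A k) / (2 * γ) * nrm (x - w0) ^ 2) W (z k))
    (K : ℕ) (hK : 1 ≤ K) (u : Vec d) (hu : u ∈ W) :
    ∑ k ∈ Finset.Icc 1 K, a k *
        ((⟪F (w k), w k - u⟫ : ℝ) - σ / γ * breg nrm g (w k - w0) (u - w0)) ≤
    ∑ k ∈ Finset.Icc 1 K,
        (a k * ((⟪q k + (L ^ 2 * a k / (α * γ) ^ 2) • g (w k - z (k - 1)), w k - z k⟫ : ℝ) -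
            L ^ 2 * a k / (α * γ) ^ 2 *
              (nrm (w k - z (k - 1)) ^ 2 / 2 + γ / 2 * nrm (w k - z k) ^ 2)) +
          a k * (⟪F (w k) - q k, w k - u⟫ : ℝ)) +
      1 / (2 * γ) * nrm (u - w0) ^ 2 := by
  have hone : ∀ n : ℕ, (0:ℝ) ≤ 1 + σ * A n := fun n => by
    have := mul_nonneg hσ (hAnn n); linarith
  have hnrm0 : nrm 0 = 0 := by simpa using hsmul 0 0
  have hneg : ∀ x : Vec d, nrm (-x) = nrm x := fun x => by simpa using hsmul (-1) x
  have hIcc0 : Finset.Icc 1 0 = (∅ : Finset ℕ) := Finset.Icc_eq_empty (by omega)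
  have hzW : ∀ n : ℕ, z n ∈ W := by
    intro n
    cases n with
    | zero => rw [hz0]; exact hw0W
    | succ m => exact (hzk (m + 1) (by omega)).1
  have hminall : ∀ n : ℕ, ∀ x ∈ W,
      (⟪∑ i ∈ Finset.Icc 1 n, a i • (q i - (σ / γ) • g (w i - w0)), z n⟫ : ℝ) +
        (1 + σ * A n) / (2 * γ) * nrm (z n - w0) ^ 2 ≤
      (⟪∑ i ∈ Finset.Icc 1 n, a i • (q i - (σ / γ) • g (w i - w0)), x⟫ : ℝ) +
        (1 + σ * A n) / (2 * γ) * nrm (x - w0) ^ 2 := by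
    intro n x hx
    cases n with
    | zero =>
      rw [hIcc0]
      simp only [Finset.sum_empty, inner_zero_left, hz0, sub_self, hnrm0, hA0]
      have : (0:ℝ) ≤ (1 + σ * 0) / (2 * γ) * nrm (x - w0) ^ 2 := by positivity
      simpa using this
    | succ m => exact isMinOn_iff.mp (hzk (m + 1) (by omega)).2 x hx
  -- the estimation-sequence claim
  have claim : ∀ N : ℕ,
      ∑ k ∈ Finset.Icc 1 N,
        (a k * ((⟪q k, w k⟫ : ℝ) - σ / γ * ⟪g (w k - w0), w k⟫) +
          σ * a k / (2 * γ) * nrm (w k - w0) ^ 2 -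
          a k * ((⟪q k + (L ^ 2 * a k / (α * γ) ^ 2) • g (w k - z (k - 1)), w k - z k⟫ : ℝ) -
            L ^ 2 * a k / (α * γ) ^ 2 *
              (nrm (w k - z (k - 1)) ^ 2 / 2 + γ / 2 * nrm (w k - z k) ^ 2))) ≤
      (⟪∑ i ∈ Finset.Icc 1 N, a i • (q i - (σ / γ) • g (w i - w0)), z N⟫ : ℝ) +
        (1 + σ * A N) / (2 * γ) * nrm (z N - w0) ^ 2 := by
    intro N
    induction N with
    | zero =>
      rw [hIcc0]
      simp only [Finset.sum_empty, inner_zero_left, hz0, sub_self, hnrm0]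
      norm_num
    | succ n ih =>
      have hn1 : 1 ≤ n + 1 := by omega
      have hA' : A (n + 1) = A n + a (n + 1) := by
        have := hArec (n + 1) hn1; simpa using this
      have hack' : a (n + 1) * (L ^ 2 * a (n + 1) / (α * γ) ^ 2) = 1 + σ * A n := by
        have := hack (n + 1) hn1; simpa using this
      have growth := min_quad_growth W hWcv nrm g γ hγ hsmul hstrong
        (∑ i ∈ Finset.Icc 1 n, a i • (q i - (σ / γ) • g (w i - w0))) w0
        (1 + σ * A n) (hone n) (z n) (hzW n) (hminall n) (z (n + 1)) (hzW (n + 1))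
      have h1 := hstrong (w (n + 1) - w0) (z (n + 1) - w0)
      rw [sub_sub_sub_cancel_right] at h1
      have h2 := hstrong (w (n + 1) - z n) (z (n + 1) - z n)
      rw [sub_sub_sub_cancel_right] at h2
      have e3 : nrm (z (n + 1) - w (n + 1)) = nrm (w (n + 1) - z (n + 1)) := by
        rw [← neg_sub (w (n + 1)) (z (n + 1)), hneg]
      rw [e3] at h1 h2
      simp only [inner_sub_right] at h1 h2
      have hstep' := step_ineq (a (n + 1)) (L ^ 2 * a (n + 1) / (α * γ) ^ 2) (1 + σ * A n) σ γ
        (⟪q (n + 1), w (n + 1)⟫ : ℝ) (⟪q (n + 1), z (n + 1)⟫ : ℝ)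
        (⟪g (w (n + 1) - w0), w (n + 1)⟫ : ℝ) (⟪g (w (n + 1) - w0), z (n + 1)⟫ : ℝ)
        ((⟪g (w (n + 1) - z n), w (n + 1)⟫ : ℝ) - ⟪g (w (n + 1) - z n), z (n + 1)⟫)
        (nrm (w (n + 1) - w0) ^ 2) (nrm (z (n + 1) - w0) ^ 2)
        (nrm (w (n + 1) - z (n + 1)) ^ 2) (nrm (w (n + 1) - z n) ^ 2)
        (nrm (z (n + 1) - z n) ^ 2)
        hγ hσ (hak (n + 1) hn1) (hone n) hack' (sq_nonneg _)
        (by linarith) (by linarith)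
      rw [Finset.sum_Icc_succ_top hn1, Finset.sum_Icc_succ_top hn1]
      simp only [Nat.add_sub_cancel, inner_add_left, inner_sub_left, inner_sub_right,
        real_inner_smul_left] at ih hstep' growth ⊢
      rw [hA']
      simp only [div_eq_mul_inv, mul_inv] at ih hstep' growth ⊢
      linarith [ih, hstep', growth]
  -- final assembly
  have hψu := hminall K u hu
  have hclaim := claim K
  have hsuma : ∀ N : ℕ, ∑ i ∈ Finset.Icc 1 N, a i = A N := by
    intro N
    induction N with
    | zero => rw [hIcc0, Finset.sum_empty, hA0]
    | succ n ihn =>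
      rw [Finset.sum_Icc_succ_top (by omega : 1 ≤ n + 1), ihn, hArec (n + 1) (by omega)]
      simp
  have hSu : (⟪∑ i ∈ Finset.Icc 1 K, a i • (q i - (σ / γ) • g (w i - w0)), u⟫ : ℝ) =
      ∑ i ∈ Finset.Icc 1 K, a i * ((⟪q i, u⟫ : ℝ) - σ / γ * ⟪g (w i - w0), u⟫) := by
    rw [sum_inner]
    refine Finset.sum_congr rfl fun i _ => ?_
    rw [real_inner_smul_left, inner_sub_left, real_inner_smul_left]
  have hterm : ∀ k ∈ Finset.Icc 1 K,
      a k * ((⟪F (w k), w k - u⟫ : ℝ) - σ / γ * breg nrm g (w k - w0) (u - w0)) =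
      (a k * ((⟪q k + (L ^ 2 * a k / (α * γ) ^ 2) • g (w k - z (k - 1)), w k - z k⟫ : ℝ) -
          L ^ 2 * a k / (α * γ) ^ 2 *
            (nrm (w k - z (k - 1)) ^ 2 / 2 + γ / 2 * nrm (w k - z k) ^ 2)) +
        a k * (⟪F (w k) - q k, w k - u⟫ : ℝ)) +
      ((a k * ((⟪q k, w k⟫ : ℝ) - σ / γ * ⟪g (w k - w0), w k⟫) +
          σ * a k / (2 * γ) * nrm (w k - w0) ^ 2 -
          a k * ((⟪q k + (L ^ 2 * a k / (α * γ) ^ 2) • g (w k - z (k - 1)), w k - z k⟫ : ℝ) -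
            L ^ 2 * a k / (α * γ) ^ 2 *
              (nrm (w k - z (k - 1)) ^ 2 / 2 + γ / 2 * nrm (w k - z k) ^ 2))) -
        (a k * ((⟪q k, u⟫ : ℝ) - σ / γ * ⟪g (w k - w0), u⟫) +
          σ * a k / (2 * γ) * nrm (u - w0) ^ 2)) := by
    intro k _
    simp only [breg, sub_sub_sub_cancel_right, inner_add_left, inner_sub_left,
      inner_sub_right, real_inner_smul_left]
    ring
  have hsum_s : ∑ k ∈ Finset.Icc 1 K,
      (a k * ((⟪q k, u⟫ : ℝ) - σ / γ * ⟪g (w k - w0), u⟫) +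
        σ * a k / (2 * γ) * nrm (u - w0) ^ 2) =
      (⟪∑ i ∈ Finset.Icc 1 K, a i • (q i - (σ / γ) • g (w i - w0)), u⟫ : ℝ) +
        A K * (σ / (2 * γ) * nrm (u - w0) ^ 2) := by
    rw [Finset.sum_add_distrib]
    congr 1
    · exact hSu.symm
    · rw [Finset.sum_congr rfl
        (fun k _ => show σ * a k / (2 * γ) * nrm (u - w0) ^ 2 =
          a k * (σ / (2 * γ) * nrm (u - w0) ^ 2) by ring),
        ← Finset.sum_mul, hsuma K]
  calc ∑ k ∈ Finset.Icc 1 K, a k *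
        ((⟪F (w k), w k - u⟫ : ℝ) - σ / γ * breg nrm g (w k - w0) (u - w0))
      = ∑ k ∈ Finset.Icc 1 K,
        ((a k * ((⟪q k + (L ^ 2 * a k / (α * γ) ^ 2) • g (w k - z (k - 1)), w k - z k⟫ : ℝ) -
            L ^ 2 * a k / (α * γ) ^ 2 *
              (nrm (w k - z (k - 1)) ^ 2 / 2 + γ / 2 * nrm (w k - z k) ^ 2)) +
          a k * (⟪F (w k) - q k, w k - u⟫ : ℝ)) +
        ((a k * ((⟪q k, w k⟫ : ℝ) - σ / γ * ⟪g (w k - w0), w k⟫) +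
            σ * a k / (2 * γ) * nrm (w k - w0) ^ 2 -
            a k * ((⟪q k + (L ^ 2 * a k / (α * γ) ^ 2) • g (w k - z (k - 1)), w k - z k⟫ : ℝ) -
              L ^ 2 * a k / (α * γ) ^ 2 *
                (nrm (w k - z (k - 1)) ^ 2 / 2 + γ / 2 * nrm (w k - z k) ^ 2))) -
          (a k * ((⟪q k, u⟫ : ℝ) - σ / γ * ⟪g (w k - w0), u⟫) +
            σ * a k / (2 * γ) * nrm (u - w0) ^ 2))) := Finset.sum_congr rfl hterm
    _ = (∑ k ∈ Finset.Icc 1 K,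
        (a k * ((⟪q k + (L ^ 2 * a k / (α * γ) ^ 2) • g (w k - z (k - 1)), w k - z k⟫ : ℝ) -
            L ^ 2 * a k / (α * γ) ^ 2 *
              (nrm (w k - z (k - 1)) ^ 2 / 2 + γ / 2 * nrm (w k - z k) ^ 2)) +
          a k * (⟪F (w k) - q k, w k - u⟫ : ℝ))) +
        ((∑ k ∈ Finset.Icc 1 K,
          (a k * ((⟪q k, w k⟫ : ℝ) - σ / γ * ⟪g (w k - w0), w k⟫) +
            σ * a k / (2 * γ) * nrm (w k - w0) ^ 2 -
            a k * ((⟪q k + (L ^ 2 * a k / (α * γ) ^ 2) • g (w k - z (k - 1)), w k - z k⟫ : ℝ) -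
              L ^ 2 * a k / (α * γ) ^ 2 *
                (nrm (w k - z (k - 1)) ^ 2 / 2 + γ / 2 * nrm (w k - z k) ^ 2)))) -
        ∑ k ∈ Finset.Icc 1 K,
          (a k * ((⟪q k, u⟫ : ℝ) - σ / γ * ⟪g (w k - w0), u⟫) +
            σ * a k / (2 * γ) * nrm (u - w0) ^ 2)) := by
        rw [Finset.sum_add_distrib, Finset.sum_sub_distrib]
    _ ≤ _ := by
        rw [hsum_s]
        have h := hclaim.trans hψu
        simp only [div_eq_mul_inv, mul_inv] at h ⊢
        linarith [h]


/-- **Lemma (stochastic estimation-sequence inequality for SOptDE).**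
Under Assumptions 1, 2 and 5, running SOptDE with parameter `σ ≥ 0`, for every `u ∈ W`
(assuming both expectations exist),
`E[Σ_{k=1}^K a_k (⟪F(w_k), w_k − u⟫ − (σ/γ) V_{w_k − w₀}(u − w₀))]
  ≤ E[Σ_{k=1}^K E_{2k}] + (1/(2γ))‖u − w₀‖²`,
where `E_{2k} = a_k (⟪F(w_k;ξ_k) + (L²a_k/(αγ)²) ∇½‖w_k − z_{k−1}‖², w_k − z_k⟫
  − (L²a_k/(αγ)²)(½‖w_k − z_{k−1}‖² + (γ/2)‖w_k − z_k‖²))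
  + a_k ⟪F(w_k) − F(w_k;ξ_k), w_k − u⟫`. -/
theorem soptde_estimation_sequence_inequality
    {d : ℕ} {Ξ : Type} [MeasurableSpace Ξ]
    {Ω : Type} [MeasurableSpace Ω] (μ : Measure Ω) [IsProbabilityMeasure μ]
    (ν : Measure Ξ) [IsProbabilityMeasure ν]
    -- ξ₀, ξ₁, … are i.i.d. with common law ν
    (ξ : ℕ → Ω → Ξ) (hξmeas : ∀ k, Measurable (ξ k))
    (hξindep : ProbabilityTheory.iIndepFun ξ μ)
    (hξdist : ∀ k, μ.map (ξ k) = ν)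
    (W : Set (Vec d)) (hWne : W.Nonempty) (hWcl : IsClosed W) (hWcv : Convex ℝ W)
    (F : Vec d → Vec d) (nrm : Vec d → ℝ) (g : Vec d → Vec d)
    (L γ δ α s σ : ℝ)
    -- `nrm` is a norm on ℝ^d
    (hnrm_pos : ∀ x : Vec d, x ≠ 0 → 0 < nrm x)
    (hnrm_add : ∀ x y : Vec d, nrm (x + y) ≤ nrm x + nrm y)
    (hnrm_smul : ∀ (c : ℝ) (x : Vec d), nrm (c • x) = |c| * nrm x)
    (hL : 0 < L) (hγ0 : 0 < γ) (hγ1 : γ ≤ 1) (hδ : 0 < δ) (hs : 0 ≤ s) (hσ : 0 ≤ σ)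
    -- Assumption 1
    (hLip : ∀ v ∈ W, ∀ u ∈ W, dualNorm nrm (F v - F u) ≤ L * nrm (v - u))
    -- Assumption 2
    (hgrad : ∀ x : Vec d, HasGradientAt (fun v : Vec d => nrm v ^ 2 / 2) (g x) x)
    (hstrong : ∀ v x : Vec d,
      nrm v ^ 2 / 2 + ⟪g v, x - v⟫ + γ / 2 * nrm (x - v) ^ 2 ≤ nrm x ^ 2 / 2)
    (hgbound : ∀ x : Vec d, dualNorm nrm (g x) ≤ δ * nrm x)
    -- Assumption 5: unbiased stochastic oracle with variance bounded by s²
    (Fs : Vec d → Ξ → Vec d) (hFsmeas : Measurable (Function.uncurry Fs))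
    (hunbiased : ∀ v ∈ W, ∫ x, Fs v x ∂ν = F v)
    (hvariance : ∀ v ∈ W, ∫ x, dualNorm nrm (Fs v x - F v) ^ 2 ∂ν ≤ s ^ 2)
    -- SOptDE algorithm with σ = 0
    (hα : α = min (γ / 32) (1 / 16))
    (a A : ℕ → ℝ) (hA0 : A 0 = 0)
    (ha : ∀ k, 1 ≤ k → a k = α * γ * Real.sqrt (1 + σ * A (k - 1)) / L)
    (hArec : ∀ k, 1 ≤ k → A k = A (k - 1) + a k)
    (w z : ℕ → Ω → Vec d) (w0 : Vec d) (hw0W : w0 ∈ W)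
    (hw0 : ∀ ω, w 0 ω = w0) (hz0 : ∀ ω, z 0 ω = w0)
    (hwmeas : ∀ k, Measurable (w k)) (hzmeas : ∀ k, Measurable (z k))
    (hwk : ∀ k, 1 ≤ k → ∀ ω, w k ω ∈ W ∧
      IsMinOn (fun x => (⟪Fs (w (k - 1) ω) (ξ (k - 1) ω), x⟫ : ℝ) +
        L ^ 2 * a k / (2 * (α * γ) ^ 2) * nrm (x - z (k - 1) ω) ^ 2) W (w k ω))
    (hzk : ∀ k, 1 ≤ k → ∀ ω, z k ω ∈ W ∧
      IsMinOn (fun x =>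
        (⟪∑ i ∈ Finset.Icc 1 k, a i • (Fs (w i ω) (ξ i ω) - (σ / γ) • g (w i ω - w0)),
          x⟫ : ℝ) +
        (1 + σ * A k) / (2 * γ) * nrm (x - w0) ^ 2) W (z k ω))
    (K : ℕ) (hK : 1 ≤ K) :
    ∀ u ∈ W,
      Integrable (fun ω => ∑ k ∈ Finset.Icc 1 K, a k *
        ((⟪F (w k ω), w k ω - u⟫ : ℝ) - σ / γ * breg nrm g (w k ω - w0) (u - w0))) μ →
      Integrable (fun ω => ∑ k ∈ Finset.Icc 1 K,
        (a k * ((⟪Fs (w k ω) (ξ k ω) +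
              (L ^ 2 * a k / (α * γ) ^ 2) • g (w k ω - z (k - 1) ω), w k ω - z k ω⟫ : ℝ) -
            L ^ 2 * a k / (α * γ) ^ 2 *
              (nrm (w k ω - z (k - 1) ω) ^ 2 / 2 + γ / 2 * nrm (w k ω - z k ω) ^ 2)) +
          a k * (⟪F (w k ω) - Fs (w k ω) (ξ k ω), w k ω - u⟫ : ℝ))) μ →
      (∫ ω, (∑ k ∈ Finset.Icc 1 K, a k *
          ((⟪F (w k ω), w k ω - u⟫ : ℝ) - σ / γ * breg nrm g (w k ω - w0) (u - w0))) ∂μ) ≤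
        (∫ ω, (∑ k ∈ Finset.Icc 1 K,
          (a k * ((⟪Fs (w k ω) (ξ k ω) +
                (L ^ 2 * a k / (α * γ) ^ 2) • g (w k ω - z (k - 1) ω), w k ω - z k ω⟫ : ℝ) -
              L ^ 2 * a k / (α * γ) ^ 2 *
                (nrm (w k ω - z (k - 1) ω) ^ 2 / 2 + γ / 2 * nrm (w k ω - z k ω) ^ 2)) +
            a k * (⟪F (w k ω) - Fs (w k ω) (ξ k ω), w k ω - u⟫ : ℝ))) ∂μ) +
        1 / (2 * γ) * nrm (u - w0) ^ 2 := by
  intro u hu hint1 hint2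
  have hα0 : 0 < α := by
    rw [hα]; exact lt_min (by positivity) (by norm_num)
  have hanonneg : ∀ k, 1 ≤ k → 0 ≤ a k := fun k hk => by
    rw [ha k hk]; positivity
  have hAnn : ∀ k, 0 ≤ A k := by
    intro k
    induction k with
    | zero => rw [hA0]
    | succ n ihn =>
      have h1 := hArec (n + 1) (by omega)
      have h2 := hanonneg (n + 1) (by omega)
      simp only [Nat.add_sub_cancel] at h1
      linarith
  have hack : ∀ k, 1 ≤ k → a k * (L ^ 2 * a k / (α * γ) ^ 2) = 1 + σ * A (k - 1) := by
    intro k hk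
    have hm : (0:ℝ) ≤ 1 + σ * A (k - 1) := by
      have := mul_nonneg hσ (hAnn (k - 1)); linarith
    have hsq : Real.sqrt (1 + σ * A (k - 1)) ^ 2 = 1 + σ * A (k - 1) := Real.sq_sqrt hm
    rw [ha k hk]
    rw [show α * γ * Real.sqrt (1 + σ * A (k - 1)) / L *
        (L ^ 2 * (α * γ * Real.sqrt (1 + σ * A (k - 1)) / L) / (α * γ) ^ 2) =
        Real.sqrt (1 + σ * A (k - 1)) ^ 2 * (L ^ 2 / L ^ 2) * ((α * γ) ^ 2 / (α * γ) ^ 2)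
        from by ring]
    rw [hsq, div_self (by positivity), div_self (by positivity), mul_one, mul_one]
  have hpt : ∀ ω : Ω,
      (∑ k ∈ Finset.Icc 1 K, a k *
        ((⟪F (w k ω), w k ω - u⟫ : ℝ) - σ / γ * breg nrm g (w k ω - w0) (u - w0))) ≤
      (∑ k ∈ Finset.Icc 1 K,
        (a k * ((⟪Fs (w k ω) (ξ k ω) +
              (L ^ 2 * a k / (α * γ) ^ 2) • g (w k ω - z (k - 1) ω), w k ω - z k ω⟫ : ℝ) -
            L ^ 2 * a k / (α * γ) ^ 2 *
              (nrm (w k ω - z (k - 1) ω) ^ 2 / 2 + γ / 2 * nrm (w k ω - z k ω) ^ 2)) +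
          a k * (⟪F (w k ω) - Fs (w k ω) (ξ k ω), w k ω - u⟫ : ℝ))) +
        1 / (2 * γ) * nrm (u - w0) ^ 2 := by
    intro ω
    exact pointwise_est W hWcv nrm g F γ σ L α hγ0 hσ hnrm_smul hstrong a A
      hanonneg hAnn hA0 hArec hack
      (fun k => Fs (w k ω) (ξ k ω)) (fun k => w k ω) (fun k => z k ω) w0 hw0W (hz0 ω)
      (fun k hk => hzk k hk ω) K hK u hu
  calc (∫ ω, (∑ k ∈ Finset.Icc 1 K, a k *
          ((⟪F (w k ω), w k ω - u⟫ : ℝ) - σ / γ * breg nrm g (w k ω - w0) (u - w0))) ∂μ)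
      ≤ ∫ ω, ((∑ k ∈ Finset.Icc 1 K,
          (a k * ((⟪Fs (w k ω) (ξ k ω) +
                (L ^ 2 * a k / (α * γ) ^ 2) • g (w k ω - z (k - 1) ω), w k ω - z k ω⟫ : ℝ) -
              L ^ 2 * a k / (α * γ) ^ 2 *
                (nrm (w k ω - z (k - 1) ω) ^ 2 / 2 + γ / 2 * nrm (w k ω - z k ω) ^ 2)) +
            a k * (⟪F (w k ω) - Fs (w k ω) (ξ k ω), w k ω - u⟫ : ℝ))) +
          1 / (2 * γ) * nrm (u - w0) ^ 2) ∂μ :=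
        integral_mono hint1 (hint2.add (integrable_const _)) hpt
    _ = _ := by
        rw [integral_add hint2 (integrable_const _), integral_const, probReal_univ, one_smul]
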